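/- For a polynomial functor given by shapes S and positions P : S → Type, the M-type M S P together with its destructor dest : M S P → Σ s : S, (P s → M S P) is a terminal coalgebra: for every type X and map β : X → Σ s : S, (P s → X) there exists a unique function f : X → M S P such that dest (f x) = (fst (β x), f ∘ snd (β x)) for all x : X. -/

import Mathlib

theorem m_terminal_coalgebra (S : Type) (P : S → Type) (X : Type)
    (β : X → Σ s : S, P s → X) :
    ∃! f : X → PFunctor.M ⟨S, P⟩, ∀ x : X,
      PFunctor.M.dest (f x) = ⟨(β x).1, f ∘ (β x).2⟩ := by
  refine ⟨PFunctor.M.corec β, fun x => ?_, fun g hg => ?_⟩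
  · exact PFunctor.M.dest_corec (P := ⟨S, P⟩) β x
  · funext x
    apply PFunctor.M.bisim (fun a b => ∃ x, a = g x ∧ b = PFunctor.M.corec β x)
    · rintro a b ⟨x, rfl, rfl⟩
      refine ⟨(β x).1, g ∘ (β x).2, PFunctor.M.corec β ∘ (β x).2, hg x, ?_, ?_⟩
      · exact PFunctor.M.dest_corec (P := ⟨S, P⟩) β x
      · intro i; exact ⟨(β x).2 i, rfl, rfl⟩
    · exact ⟨x, rfl, rfl⟩
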